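/- Let (E1,q1), (E2,q2), (E3,q3) be metric groups, let L be a Lagrangian subgroup of (E1 ⊕ E2, q1⁻¹ ⊕ q2) and let M be a Lagrangian subgroup of (E2 ⊕ E3, q2⁻¹ ⊕ q3). Then for every (a1,a3) ∈ M∘L, the number of elements a2 ∈ E2 with (a1,a2) ∈ L and (a2,a3) ∈ M equals |{a2 ∈ E2 : (0,a2) ∈ L and (a2,0) ∈ M}|; in particular this fiber count is independent of the point (a1,a3) ∈ M∘L. -/
import Mathlib

/-- The symmetric bicharacter associated to a quadratic form `q` with values in `ℂˣ`. -/
def bq {M : Type*} [AddCommGroup M] (q : M → ℂˣ) (x y : M) : ℂˣ :=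
  q (x + y) * (q x)⁻¹ * (q y)⁻¹

/-- `(M, q)` is a metric group: `q` is even, `b_q` is biadditive and nondegenerate. -/
def IsMetric {M : Type*} [AddCommGroup M] (q : M → ℂˣ) : Prop :=
  (∀ x, q (-x) = q x) ∧
  (∀ x y z, bq q (x + y) z = bq q x z * bq q y z) ∧
  (∀ x y z, bq q x (y + z) = bq q x y * bq q x z) ∧
  (∀ x, (∀ y, bq q x y = 1) → x = 0)

/-- A subgroup `L` is Lagrangian for `q` if `q = 1` on `L` and `|L|² = |M|`. -/
def IsLagrangian {M : Type*} [AddCommGroup M] (q : M → ℂˣ) (L : AddSubgroup M) : Prop :=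
  (∀ x ∈ L, q x = 1) ∧ Nat.card L ^ 2 = Nat.card M

/-- Composition of Lagrangian correspondences (as a set). -/
def compL {E1 E2 E3 : Type*} [AddCommGroup E1] [AddCommGroup E2] [AddCommGroup E3]
    (L : AddSubgroup (E1 × E2)) (M : AddSubgroup (E2 × E3)) : Set (E1 × E3) :=
  {p | ∃ a2 : E2, (p.1, a2) ∈ L ∧ (a2, p.2) ∈ M}

/-- For every point of `M∘L` the fiber count of middle elements `a2` is the same,
namely the fiber over `(0,0)`. -/
theorem stmt9 {E1 E2 E3 : Type*} [AddCommGroup E1] [Fintype E1]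
    [AddCommGroup E2] [Fintype E2] [AddCommGroup E3] [Fintype E3]
    (q1 : E1 → ℂˣ) (q2 : E2 → ℂˣ) (q3 : E3 → ℂˣ)
    (h1 : IsMetric q1) (h2 : IsMetric q2) (h3 : IsMetric q3)
    (L : AddSubgroup (E1 × E2)) (M : AddSubgroup (E2 × E3))
    (hL : IsLagrangian (fun p : E1 × E2 => (q1 p.1)⁻¹ * q2 p.2) L)
    (hM : IsLagrangian (fun p : E2 × E3 => (q2 p.1)⁻¹ * q3 p.2) M) :
    ∀ p : E1 × E3, p ∈ compL L M →
      Nat.card {a2 : E2 // (p.1, a2) ∈ L ∧ (a2, p.2) ∈ M} =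
        Nat.card {a2 : E2 // ((0 : E1), a2) ∈ L ∧ (a2, (0 : E3)) ∈ M} := by
  rintro p ⟨b, hb1, hb2⟩
  refine Nat.card_eq_of_bijective (fun a => ⟨a.1 - b, ?_, ?_⟩) ?_
  · have := L.sub_mem a.2.1 hb1
    simpa using this
  · have := M.sub_mem a.2.2 hb2
    simpa using this
  · constructor
    · rintro ⟨x, hx⟩ ⟨y, hy⟩ h
      have hxy : x - b = y - b := congrArg Subtype.val h
      exact Subtype.ext (by simpa using sub_left_injective hxy)
    · rintro ⟨c, hc1, hc2⟩
      refine ⟨⟨c + b, ?_, ?_⟩, ?_⟩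
      · have := L.add_mem hc1 hb1
        simpa using this
      · have := M.add_mem hc2 hb2
        simpa using this
      · simp
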